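/- arXiv:1008.4431 — 5 statements merged into one kernel-verified Lean document; each statement's English description precedes it below -/
import Mathlib

section
/- Let a be a positive irrational real number, and suppose there exist rational numbers b and c with a² + b·a + c = 0 such that the conjugate root ā = −b − a satisfies ā > a. Then there exist positive integers M, C, D, each divisible by 4, such that M² − C·D > 0 and a = (M − √(M² − C·D))/C. -/
/-- If `a > 0` is irrational, satisfies a quadratic equation `a² + b·a + c = 0` over `ℚ`,
and its conjugate `ā = -b - a` satisfies `ā > a`, then `a` can be written as
`(M - √(M² - C·D))/C` for positive integers `M, C, D` all divisible by `4` with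
`M² - C·D > 0`.  This is the arithmetic core of Proposition 2.4(3). -/
theorem quadratic_irrational_as_mu (a : ℝ) (ha : 0 < a) (hirr : Irrational a) (b c : ℚ)
    (heq : a ^ 2 + (b : ℝ) * a + (c : ℝ) = 0) (hconj : -(b : ℝ) - a > a) :
    ∃ M C D : ℕ, 0 < M ∧ 0 < C ∧ 0 < D ∧ 4 ∣ M ∧ 4 ∣ C ∧ 4 ∣ D ∧
      0 < (M : ℝ) ^ 2 - (C : ℝ) * (D : ℝ) ∧
      a = ((M : ℝ) - Real.sqrt ((M : ℝ) ^ 2 - (C : ℝ) * (D : ℝ))) / (C : ℝ) := by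
  -- b < 0 in ℚ
  have hbR : (b : ℝ) < 0 := by linarith
  have hb : b < 0 := by exact_mod_cast hbR
  -- c > 0 in ℚ : c = a * (-b - a)
  have hcR : (0 : ℝ) < (c : ℝ) := by nlinarith
  have hc : 0 < c := by exact_mod_cast hcR
  have hbnum : 0 < -b.num := by
    have := Rat.num_pos.mpr (neg_pos.mpr hb)
    simpa [Rat.num_neg] using this
  have hcnum : 0 < c.num := Rat.num_pos.mpr hc
  have hbden : 0 < b.den := b.pos
  have hcden : 0 < c.den := c.pos
  refine ⟨4 * (-b.num).toNat * c.den, 8 * b.den * c.den, 8 * b.den * c.num.toNat,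
    Nat.mul_pos (Nat.mul_pos (by norm_num) (by omega)) hcden,
    by positivity,
    Nat.mul_pos (Nat.mul_pos (by norm_num) hbden) (by omega), ⟨(-b.num).toNat * c.den, by ring⟩,
    ⟨2 * b.den * c.den, by ring⟩, ⟨2 * b.den * c.num.toNat, by ring⟩, ?_, ?_⟩
  -- cast facts
  all_goals {
    have hM : ((4 * (-b.num).toNat * c.den : ℕ) : ℝ) = 4 * (-(b : ℝ) * b.den) * c.den := by
      have h1 : (((-b.num).toNat : ℕ) : ℝ) = -(b.num : ℝ) := by
        exact_mod_cast congrArg (fun z : ℤ => (z : ℝ)) (Int.toNat_of_nonneg hbnum.le)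
      have h2 : (b : ℝ) = (b.num : ℝ) / (b.den : ℝ) := by
        exact_mod_cast congrArg (Rat.cast (K := ℝ)) b.num_div_den.symm
      push_cast [h1, h2]
      field_simp
      try ring
    have hC : ((8 * b.den * c.den : ℕ) : ℝ) = 8 * b.den * c.den := by push_cast; ring
    have hD : ((8 * b.den * c.num.toNat : ℕ) : ℝ) = 8 * (b.den : ℝ) * ((c : ℝ) * c.den) := by
      have h1 : (((c.num).toNat : ℕ) : ℝ) = (c.num : ℝ) := by
        exact_mod_cast congrArg (fun z : ℤ => (z : ℝ)) (Int.toNat_of_nonneg hcnum.le)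
      have h2 : (c : ℝ) = (c.num : ℝ) / (c.den : ℝ) := by
        exact_mod_cast congrArg (Rat.cast (K := ℝ)) c.num_div_den.symm
      push_cast [h1, h2]
      field_simp
      try ring
    have hbd : (0 : ℝ) < (b.den : ℝ) := by exact_mod_cast hbden
    have hcd : (0 : ℝ) < (c.den : ℝ) := by exact_mod_cast hcden
    have hdisc : ((4 * (-b.num).toNat * c.den : ℕ) : ℝ) ^ 2 -
        ((8 * b.den * c.den : ℕ) : ℝ) * ((8 * b.den * c.num.toNat : ℕ) : ℝ)
        = (4 * (b.den : ℝ) * c.den * (-(b : ℝ) - 2 * a)) ^ 2 := by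
      rw [hM, hC, hD]
      nlinarith [sq_nonneg ((b.den : ℝ) * c.den), sq_nonneg a]
    have hpos : (0:ℝ) < 4 * (b.den : ℝ) * c.den * (-(b : ℝ) - 2 * a) := by
      have h3 : (0:ℝ) < -(b : ℝ) - 2 * a := by linarith
      positivity
    first
    | · rw [hdisc]
        exact pow_pos hpos 2
    | · rw [hdisc, Real.sqrt_sq hpos.le, hM, hC]
        field_simp
        ring
  }
end

section
/- Let f(r) = 4 − 3r − √(9r² − 15r + 7) and K = {(r, t) ∈ ℝ² : 0 ≤ r ≤ 1 and 0 ≤ t ≤ f(r)}. Then K is not the convex hull of any finite subset of ℝ²; in particular K is not a polygon. -/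
/-- `9r² - 15r + 7` is the squared norm of the complex number `(3r - 5/2) + (√3/2)i`. -/
lemma sqrt_eq_norm (r : ℝ) :
    Real.sqrt (9 * r ^ 2 - 15 * r + 7) = ‖(⟨3 * r - 5/2, Real.sqrt 3 / 2⟩ : ℂ)‖ := by
  rw [Complex.norm_def, Complex.normSq_mk]
  congr 1
  have h3 : Real.sqrt 3 * Real.sqrt 3 = 3 := Real.mul_self_sqrt (by norm_num)
  nlinarith [h3]

/-- Strict convexity of `r ↦ √(9r² - 15r + 7)`. -/
lemma sqrt_strict (x y a b : ℝ) (hxy : x ≠ y) (ha : 0 < a) (hb : 0 < b) (hab : a + b = 1) :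
    Real.sqrt (9 * (a*x + b*y) ^ 2 - 15 * (a*x + b*y) + 7) <
      a * Real.sqrt (9 * x ^ 2 - 15 * x + 7) + b * Real.sqrt (9 * y ^ 2 - 15 * y + 7) := by
  have h3 : (0:ℝ) < Real.sqrt 3 / 2 := by positivity
  set zx : ℂ := ⟨3 * x - 5/2, Real.sqrt 3 / 2⟩
  set zy : ℂ := ⟨3 * y - 5/2, Real.sqrt 3 / 2⟩
  have hsum : (⟨3 * (a*x + b*y) - 5/2, Real.sqrt 3 / 2⟩ : ℂ) = a • zx + b • zy := by
    apply Complex.ext <;>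
      simp [zx, zy, Complex.smul_re, Complex.smul_im, Complex.add_re, Complex.add_im] <;>
      nlinarith [hab]
  have hzx : zx ≠ 0 := by
    intro h
    have := congrArg Complex.im h
    simp [zx] at this
  have hzy : zy ≠ 0 := by
    intro h
    have := congrArg Complex.im h
    simp [zy] at this
  have hray : ¬ SameRay ℝ (a • zx) (b • zy) := by
    intro h
    have hax : a • zx ≠ 0 := smul_ne_zero ha.ne' hzx
    have hby : b • zy ≠ 0 := smul_ne_zero hb.ne' hzy
    obtain ⟨r₁, r₂, hr₁, hr₂, heq⟩ := h.exists_pos hax hby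
    have him := congrArg Complex.im heq
    have hre := congrArg Complex.re heq
    simp [zx, zy, Complex.smul_im, Complex.smul_re, smul_smul] at him hre
    have h1 : r₁ * a = r₂ * b := by
      have := him
      nlinarith [h3]
    have h2 : (r₁ * a) * (3 * x - 5/2) = (r₂ * b) * (3 * y - 5/2) := by nlinarith [hre]
    rw [h1] at h2
    have hrb : 0 < r₂ * b := mul_pos hr₂ hb
    have : x = y := by nlinarith
    exact hxy this
  have hlt : ‖a • zx + b • zy‖ < ‖a • zx‖ + ‖b • zy‖ := norm_add_lt_of_not_sameRay hray
  rw [sqrt_eq_norm, sqrt_eq_norm, sqrt_eq_norm, hsum]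
  rwa [norm_smul, norm_smul, Real.norm_eq_abs, Real.norm_eq_abs,
    abs_of_pos ha, abs_of_pos hb] at hlt

/-- The region `K = {(r, t) : 0 ≤ r ≤ 1, 0 ≤ t ≤ 4 - 3r - √(9r² - 15r + 7)}` is not the
convex hull of any finite subset of `ℝ²`; in particular it is not a polygon. -/
theorem K_not_polyhedral :
    ∀ F : Set (ℝ × ℝ), F.Finite →
      {p : ℝ × ℝ | 0 ≤ p.1 ∧ p.1 ≤ 1 ∧ 0 ≤ p.2 ∧
          p.2 ≤ 4 - 3 * p.1 - Real.sqrt (9 * p.1 ^ 2 - 15 * p.1 + 7)} ≠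
        convexHull ℝ F := by
  intro F hF hK
  -- notation
  set f : ℝ → ℝ := fun r => 4 - 3 * r - Real.sqrt (9 * r ^ 2 - 15 * r + 7) with hf
  set K : Set (ℝ × ℝ) :=
    {p : ℝ × ℝ | 0 ≤ p.1 ∧ p.1 ≤ 1 ∧ 0 ≤ p.2 ∧
        p.2 ≤ 4 - 3 * p.1 - Real.sqrt (9 * p.1 ^ 2 - 15 * p.1 + 7)} with hKdef
  -- the bound f is nonnegative on [0,1]
  have hfnn : ∀ r : ℝ, 0 ≤ r → r ≤ 1 → 0 ≤ f r := by
    intro r hr0 hr1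
    have hle : Real.sqrt (9 * r ^ 2 - 15 * r + 7) ≤ 4 - 3 * r := by
      have h1 : 9 * r ^ 2 - 15 * r + 7 ≤ (4 - 3 * r) ^ 2 := by nlinarith
      calc Real.sqrt (9 * r ^ 2 - 15 * r + 7) ≤ Real.sqrt ((4 - 3 * r) ^ 2) :=
            Real.sqrt_le_sqrt h1
        _ = 4 - 3 * r := Real.sqrt_sq (by linarith)
    simp only [hf]; linarith
  -- points ≤ bound: second coordinate bounded by f of first
  have hbound : ∀ p : ℝ × ℝ, p ∈ K → p.2 ≤ f p.1 := fun p hp => hp.2.2.2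
  -- every curve point with r ∈ (0,1) is an extreme point, hence in F
  have hext : ∀ r : ℝ, r ∈ Set.Ioo (0:ℝ) 1 → (r, f r) ∈ F := by
    intro r ⟨hr0, hr1⟩
    have hmem : (r, f r) ∈ K := ⟨hr0.le, hr1.le, hfnn r hr0.le hr1.le, le_refl _⟩
    have : (r, f r) ∈ K.extremePoints ℝ := by
      rw [mem_extremePoints]
      refine ⟨hmem, ?_⟩
      intro p hp q hq hseg
      obtain ⟨a, b, ha, hb, hab, heq⟩ := hseg
      have h1 : a * p.1 + b * q.1 = r := congrArg Prod.fst heq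
      have h2 : a * p.2 + b * q.2 = f r := congrArg Prod.snd heq
      have hp2 : p.2 ≤ f p.1 := hbound p hp
      have hq2 : q.2 ≤ f q.1 := hbound q hq
      by_cases hpq : p.1 = q.1
      · -- vertical case
        have hp1 : p.1 = r := by
          rw [← h1, hpq]; linear_combination (-q.1) * hab
        have hq1 : q.1 = r := by rw [← hpq]; exact hp1
        have hp2' : p.2 ≤ f r := by rw [← hp1]; exact hp2
        have hq2' : q.2 ≤ f r := by rw [← hq1]; exact hq2
        have key : a * (f r - p.2) + b * (f r - q.2) = 0 := by
          linear_combination -h2 + f r * hab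
        have hp2e : p.2 = f r := by
          nlinarith [key, mul_nonneg hb.le (sub_nonneg.2 hq2'), ha, hp2']
        have hq2e : q.2 = f r := by
          nlinarith [key, mul_nonneg ha.le (sub_nonneg.2 hp2'), hb, hq2']
        exact ⟨Prod.ext hp1 hp2e, Prod.ext hq1 hq2e⟩
      · -- strict concavity gives a contradiction
        exfalso
        have hs := sqrt_strict p.1 q.1 a b hpq ha hb hab
        have hfc : a * f p.1 + b * f q.1 < f (a * p.1 + b * q.1) := by
          simp only [hf]; nlinarith [hs]
        rw [h1] at hfc
        have : a * p.2 + b * q.2 ≤ a * f p.1 + b * f q.1 := by nlinarith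
        linarith [h2 ▸ this]
    have := this
    rw [hK] at this
    exact extremePoints_convexHull_subset this
  -- but then Ioo 0 1 injects into the finite set F : contradiction
  have hinj : Set.Ioo (0:ℝ) 1 ⊆ Prod.fst '' F := by
    intro r hr
    exact ⟨(r, f r), hext r hr, rfl⟩
  exact (Set.Ioo_infinite (by norm_num : (0:ℝ) < 1)).mono hinj (hF.image Prod.fst)
end

section
/- Let f(r) = 4 − 3r − √(9r² − 15r + 7) and Δ = {(r, t, y) ∈ ℝ³ : 0 ≤ r ≤ 1, 0 ≤ t ≤ f(r), 0 ≤ y ≤ 24 − 18r − 6t}. Then for every r ∈ (0, 1), the point (r, f(r), 0) is an extreme point of the convex set Δ. -/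
set_option maxHeartbeats 1000000

private lemma gpos (x : ℝ) : 0 < 9 * x ^ 2 - 15 * x + 7 := by
  nlinarith [sq_nonneg (3 * x - 5/2)]

private lemma s_sq (x : ℝ) :
    (Real.sqrt (9 * x ^ 2 - 15 * x + 7)) ^ 2 = 9 * x ^ 2 - 15 * x + 7 :=
  Real.sq_sqrt (gpos x).le

private lemma s_pos (x : ℝ) : 0 < Real.sqrt (9 * x ^ 2 - 15 * x + 7) :=
  Real.sqrt_pos.2 (gpos x)

/-- strict convexity of √(9x²-15x+7) across a proper convex combination -/
private lemma key (a b r₁ r₂ : ℝ) (ha : 0 < a) (hb : 0 < b) (hab : a + b = 1)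
    (hne : r₁ ≠ r₂) :
    Real.sqrt (9 * (a * r₁ + b * r₂) ^ 2 - 15 * (a * r₁ + b * r₂) + 7) <
      a * Real.sqrt (9 * r₁ ^ 2 - 15 * r₁ + 7) +
      b * Real.sqrt (9 * r₂ ^ 2 - 15 * r₂ + 7) := by
  have hb' : b = 1 - a := by linarith
  subst hb'
  set s₁ := Real.sqrt (9 * r₁ ^ 2 - 15 * r₁ + 7) with hs₁
  set s₂ := Real.sqrt (9 * r₂ ^ 2 - 15 * r₂ + 7) with hs₂
  set s := Real.sqrt (9 * (a * r₁ + (1 - a) * r₂) ^ 2 - 15 * (a * r₁ + (1 - a) * r₂) + 7) with hs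
  have h1 : s₁ ^ 2 = 9 * r₁ ^ 2 - 15 * r₁ + 7 := s_sq r₁
  have h2 : s₂ ^ 2 = 9 * r₂ ^ 2 - 15 * r₂ + 7 := s_sq r₂
  have h3 : s ^ 2 = 9 * (a * r₁ + (1 - a) * r₂) ^ 2 - 15 * (a * r₁ + (1 - a) * r₂) + 7 :=
    s_sq _
  have p1 : 0 < s₁ := s_pos r₁
  have p2 : 0 < s₂ := s_pos r₂
  have p3 : 0 < s := s_pos _
  have q1 : 9 * s₁ ^ 2 = (9 * r₁ - 15/2) ^ 2 + 27/4 := by rw [h1]; ring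
  have q2 : 9 * s₂ ^ 2 = (9 * r₂ - 15/2) ^ 2 + 27/4 := by rw [h2]; ring
  have m1 : |9 * r₁ - 15/2| ≤ 3 * s₁ := by
    rw [abs_le]
    constructor <;> nlinarith [q1, p1]
  have m2 : |9 * r₂ - 15/2| ≤ 3 * s₂ := by
    rw [abs_le]
    constructor <;> nlinarith [q2, p2]
  have mm : (9 * r₁ - 15/2) * (9 * r₂ - 15/2) ≤ 9 * s₁ * s₂ := by
    calc (9 * r₁ - 15/2) * (9 * r₂ - 15/2) ≤ |9 * r₁ - 15/2| * |9 * r₂ - 15/2| := by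
          rw [← abs_mul]; exact le_abs_self _
      _ ≤ (3 * s₁) * (3 * s₂) :=
          mul_le_mul m1 m2 (abs_nonneg _) (by linarith)
      _ = 9 * s₁ * s₂ := by ring
  have hsum : (9 * (r₁ + r₂) - 15) ^ 2 < 9 * (s₁ + s₂) ^ 2 := by nlinarith [mm, q1, q2]
  have hdiff : (s₁ - s₂) ^ 2 < 9 * (r₁ - r₂) ^ 2 := by
    have hrd : 0 < (r₁ - r₂) ^ 2 := by
      have h := sub_ne_zero.2 hne; positivity
    have hsp : 0 < (s₁ + s₂) ^ 2 := by positivity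
    have e0 : s₁ ^ 2 - s₂ ^ 2 = (r₁ - r₂) * (9 * (r₁ + r₂) - 15) := by
      rw [h1, h2]; ring
    have e1 : (s₁ - s₂) ^ 2 * (s₁ + s₂) ^ 2 = (r₁ - r₂) ^ 2 * (9 * (r₁ + r₂) - 15) ^ 2 := by
      nlinarith [e0]
    nlinarith [mul_lt_mul_of_pos_left hsum hrd, e1, hsp]
  have hs2 : s ^ 2 < (a * s₁ + (1 - a) * s₂) ^ 2 := by
    have expand : (a * s₁ + (1 - a) * s₂) ^ 2 - s ^ 2 =
        a * (1 - a) * (9 * (r₁ - r₂) ^ 2 - (s₁ - s₂) ^ 2) := by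
      rw [h3]; linear_combination a * h1 + (1 - a) * h2
    nlinarith [mul_pos ha hb, expand, hdiff]
  have hX : 0 < a * s₁ + (1 - a) * s₂ := by
    have := mul_pos ha p1; have := mul_pos hb p2; linarith
  nlinarith [hs2, p3, hX]

/-- For every `r ∈ (0, 1)`, the point `(r, f(r), 0)` with
`f(r) = 4 - 3r - √(9r² - 15r + 7)` is an extreme point of the Okounkov body
`Δ = {(r, t, y) : 0 ≤ r ≤ 1, 0 ≤ t ≤ f(r), 0 ≤ y ≤ 24 - 18r - 6t}`. -/
theorem Delta_graph_points_extreme (r : ℝ) (hr0 : 0 < r) (hr1 : r < 1) :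
    (r, 4 - 3 * r - Real.sqrt (9 * r ^ 2 - 15 * r + 7), (0 : ℝ)) ∈
      Set.extremePoints ℝ {p : ℝ × ℝ × ℝ | 0 ≤ p.1 ∧ p.1 ≤ 1 ∧ 0 ≤ p.2.1 ∧
        p.2.1 ≤ 4 - 3 * p.1 - Real.sqrt (9 * p.1 ^ 2 - 15 * p.1 + 7) ∧
        0 ≤ p.2.2 ∧ p.2.2 ≤ 24 - 18 * p.1 - 6 * p.2.1} := by
  have hsle : Real.sqrt (9 * r ^ 2 - 15 * r + 7) ≤ 4 - 3 * r := by
    rw [show (4 : ℝ) - 3 * r = Real.sqrt ((4 - 3 * r) ^ 2) from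
      (Real.sqrt_sq (by linarith)).symm]
    apply Real.sqrt_le_sqrt
    nlinarith
  have hsnn : 0 ≤ Real.sqrt (9 * r ^ 2 - 15 * r + 7) := (s_pos r).le
  constructor
  · show 0 ≤ r ∧ r ≤ 1 ∧ _
    refine ⟨hr0.le, hr1.le, by dsimp only; linarith, le_rfl,
      le_refl _, by dsimp only; linarith⟩
  · rintro ⟨r₁, t₁, y₁⟩ ⟨h10, h11, h1t0, h1t, h1y0, h1y⟩
      ⟨r₂, t₂, y₂⟩ ⟨h20, h21, h2t0, h2t, h2y0, h2y⟩ hseg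
    obtain ⟨a, b, ha, hb, hab, heq⟩ := hseg
    simp only [Prod.smul_mk, smul_eq_mul, Prod.mk_add_mk, Prod.mk.injEq] at heq
    obtain ⟨her, het, hey⟩ := heq
    simp only [Set.mem_setOf_eq] at h1t h2t
    dsimp only at h1t h2t h1t0 h2t0 h1y0 h2y0 h1y h2y h10 h20 h11 h21
    have hrr : r₁ = r₂ := by
      by_contra hne
      have hk := key a b r₁ r₂ ha hb hab hne
      rw [her] at hk
      nlinarith [mul_le_mul_of_nonneg_left h1t ha.le,
        mul_le_mul_of_nonneg_left h2t hb.le, hk, het, her, hab]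
    subst hrr
    have hr' : r₁ = r := by nlinarith [her, hab]
    subst hr'
    have hy1 : y₁ = 0 := by nlinarith [hey, hab, mul_nonneg ha.le h1y0, mul_nonneg hb.le h2y0]
    have hy2 : y₂ = 0 := by nlinarith [hey, hab, mul_nonneg ha.le h1y0, mul_nonneg hb.le h2y0]
    have ht1 : t₁ = 4 - 3 * r₁ - Real.sqrt (9 * r₁ ^ 2 - 15 * r₁ + 7) := by
      nlinarith [het, hab, mul_nonneg ha.le (sub_nonneg.2 h1t),
        mul_nonneg hb.le (sub_nonneg.2 h2t)]
    have ht2 : t₂ = 4 - 3 * r₁ - Real.sqrt (9 * r₁ ^ 2 - 15 * r₁ + 7) := by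
      nlinarith [het, hab, mul_nonneg ha.le (sub_nonneg.2 h1t),
        mul_nonneg hb.le (sub_nonneg.2 h2t)]
    exact by rw [ht1, hy1]
end

section
/- Let f(r) = 4 − 3r − √(9r² − 15r + 7) and Δ = {(r, t, y) ∈ ℝ³ : 0 ≤ r ≤ 1, 0 ≤ t ≤ f(r), 0 ≤ y ≤ 24 − 18r − 6t}. Then Δ is not the convex hull of any finite subset of ℝ³; in particular Δ is a compact convex body that is not a polytope. -/
private lemma key_le (u v : ℝ) : u*v + 3/4 ≤ Real.sqrt ((u^2+3/4)*(v^2+3/4)) := by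
  rcases le_or_gt (u*v + 3/4) 0 with h|h
  · exact h.trans (Real.sqrt_nonneg _)
  · have h2 : (u*v+3/4)^2 ≤ (u^2+3/4)*(v^2+3/4) := by nlinarith [sq_nonneg (u-v)]
    calc u*v+3/4 = Real.sqrt ((u*v+3/4)^2) := (Real.sqrt_sq h.le).symm
      _ ≤ _ := Real.sqrt_le_sqrt h2

private lemma key_lt (u v : ℝ) (huv : u ≠ v) :
    u*v + 3/4 < Real.sqrt ((u^2+3/4)*(v^2+3/4)) := by
  have hne : u - v ≠ 0 := sub_ne_zero.mpr huv
  have h0 : 0 < (u-v)^2 := by positivity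
  rcases le_or_gt (u*v + 3/4) 0 with h|h
  · have : 0 < Real.sqrt ((u^2+3/4)*(v^2+3/4)) := Real.sqrt_pos.mpr (by positivity)
    linarith
  · have h2 : (u*v+3/4)^2 < (u^2+3/4)*(v^2+3/4) := by nlinarith
    calc u*v+3/4 = Real.sqrt ((u*v+3/4)^2) := (Real.sqrt_sq h.le).symm
      _ < _ := Real.sqrt_lt_sqrt (by positivity) h2

private lemma sqrt_sum_le (x y a b : ℝ) (ha : 0 ≤ a) (hb : 0 ≤ b) (hab : a+b=1) :
    Real.sqrt ((a*x+b*y)^2 + 3/4) ≤ a * Real.sqrt (x^2+3/4) + b * Real.sqrt (y^2+3/4) := by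
  set A := Real.sqrt (x^2+3/4) with hAdef
  set B := Real.sqrt (y^2+3/4) with hBdef
  have hA2 : A^2 = x^2+3/4 := Real.sq_sqrt (by positivity)
  have hB2 : B^2 = y^2+3/4 := Real.sq_sqrt (by positivity)
  have hAB : Real.sqrt ((x^2+3/4)*(y^2+3/4)) = A*B := Real.sqrt_mul (by positivity) _
  have h1 : x*y+3/4 ≤ A*B := hAB ▸ key_le x y
  have hab2 : (a+b)^2 = 1 := by rw [hab]; norm_num
  have expand : (a*A+b*B)^2 = a^2*(x^2+3/4) + 2*(a*b)*(A*B) + b^2*(y^2+3/4) := by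
    have h : (a*A+b*B)^2 = a^2*A^2 + 2*(a*b)*(A*B) + b^2*B^2 := by ring
    rw [h, hA2, hB2]
  have h2 : (a*x+b*y)^2 + 3/4 ≤ (a*A+b*B)^2 := by
    rw [expand]
    nlinarith [mul_le_mul_of_nonneg_left h1 (mul_nonneg ha hb)]
  have h3 : 0 ≤ a*A+b*B := by positivity
  calc Real.sqrt ((a*x+b*y)^2+3/4) ≤ Real.sqrt ((a*A+b*B)^2) := Real.sqrt_le_sqrt h2
    _ = a*A+b*B := Real.sqrt_sq h3

private lemma sqrt_sum_lt (x y a b : ℝ) (hxy : x ≠ y) (ha : 0 < a) (hb : 0 < b) (hab : a+b=1) :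
    Real.sqrt ((a*x+b*y)^2 + 3/4) < a * Real.sqrt (x^2+3/4) + b * Real.sqrt (y^2+3/4) := by
  set A := Real.sqrt (x^2+3/4) with hAdef
  set B := Real.sqrt (y^2+3/4) with hBdef
  have hA2 : A^2 = x^2+3/4 := Real.sq_sqrt (by positivity)
  have hB2 : B^2 = y^2+3/4 := Real.sq_sqrt (by positivity)
  have hAB : Real.sqrt ((x^2+3/4)*(y^2+3/4)) = A*B := Real.sqrt_mul (by positivity) _
  have h1 : x*y+3/4 < A*B := hAB ▸ key_lt x y hxy
  have hab2 : (a+b)^2 = 1 := by rw [hab]; norm_num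
  have expand : (a*A+b*B)^2 = a^2*(x^2+3/4) + 2*(a*b)*(A*B) + b^2*(y^2+3/4) := by
    have h : (a*A+b*B)^2 = a^2*A^2 + 2*(a*b)*(A*B) + b^2*B^2 := by ring
    rw [h, hA2, hB2]
  have h2 : (a*x+b*y)^2 + 3/4 < (a*A+b*B)^2 := by
    rw [expand]
    nlinarith [mul_lt_mul_of_pos_left h1 (mul_pos ha hb)]
  have h3 : 0 ≤ a*A+b*B := by positivity
  calc Real.sqrt ((a*x+b*y)^2+3/4) < Real.sqrt ((a*A+b*B)^2) :=
        Real.sqrt_lt_sqrt (by positivity) h2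
    _ = a*A+b*B := Real.sqrt_sq h3

private lemma g_eq (r : ℝ) : 9*r^2 - 15*r + 7 = (3*r-5/2)^2 + 3/4 := by ring

private lemma sqrt_g_convex (r1 r2 a b : ℝ) (ha : 0 ≤ a) (hb : 0 ≤ b) (hab : a+b=1) :
    Real.sqrt (9*(a*r1+b*r2)^2 - 15*(a*r1+b*r2) + 7) ≤
      a * Real.sqrt (9*r1^2-15*r1+7) + b * Real.sqrt (9*r2^2-15*r2+7) := by
  rw [g_eq, g_eq, g_eq]
  have h := sqrt_sum_le (3*r1-5/2) (3*r2-5/2) a b ha hb hab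
  have e : (a*(3*r1-5/2)+b*(3*r2-5/2)) = 3*(a*r1+b*r2)-5/2 := by
    linear_combination (-5/2 : ℝ)*hab
  rw [e] at h
  exact h

private lemma sqrt_g_convex_lt (r1 r2 a b : ℝ) (hr : r1 ≠ r2) (ha : 0 < a) (hb : 0 < b)
    (hab : a+b=1) :
    Real.sqrt (9*(a*r1+b*r2)^2 - 15*(a*r1+b*r2) + 7) <
      a * Real.sqrt (9*r1^2-15*r1+7) + b * Real.sqrt (9*r2^2-15*r2+7) := by
  rw [g_eq, g_eq, g_eq]
  have hxy : (3*r1-5/2 : ℝ) ≠ 3*r2-5/2 := by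
    intro h; apply hr; linarith [h]  -- linarith from equality
  have h := sqrt_sum_lt (3*r1-5/2) (3*r2-5/2) a b hxy ha hb hab
  have e : (a*(3*r1-5/2)+b*(3*r2-5/2)) = 3*(a*r1+b*r2)-5/2 := by
    linear_combination (-5/2 : ℝ)*hab
  rw [e] at h
  exact h


/-- The Okounkov body
`Δ = {(r, t, y) : 0 ≤ r ≤ 1, 0 ≤ t ≤ 4 - 3r - √(9r² - 15r + 7), 0 ≤ y ≤ 24 - 18r - 6t}`
is a compact convex body that is not the convex hull of any finite subset of `ℝ³`; in
particular an ample divisor on a Fano variety can have a non-polyhedral Okounkov body. -/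
theorem Delta_not_polyhedral :
    IsCompact {p : ℝ × ℝ × ℝ | 0 ≤ p.1 ∧ p.1 ≤ 1 ∧ 0 ≤ p.2.1 ∧
        p.2.1 ≤ 4 - 3 * p.1 - Real.sqrt (9 * p.1 ^ 2 - 15 * p.1 + 7) ∧
        0 ≤ p.2.2 ∧ p.2.2 ≤ 24 - 18 * p.1 - 6 * p.2.1} ∧
    Convex ℝ {p : ℝ × ℝ × ℝ | 0 ≤ p.1 ∧ p.1 ≤ 1 ∧ 0 ≤ p.2.1 ∧
        p.2.1 ≤ 4 - 3 * p.1 - Real.sqrt (9 * p.1 ^ 2 - 15 * p.1 + 7) ∧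
        0 ≤ p.2.2 ∧ p.2.2 ≤ 24 - 18 * p.1 - 6 * p.2.1} ∧
    ∀ F : Set (ℝ × ℝ × ℝ), F.Finite →
      {p : ℝ × ℝ × ℝ | 0 ≤ p.1 ∧ p.1 ≤ 1 ∧ 0 ≤ p.2.1 ∧
          p.2.1 ≤ 4 - 3 * p.1 - Real.sqrt (9 * p.1 ^ 2 - 15 * p.1 + 7) ∧
          0 ≤ p.2.2 ∧ p.2.2 ≤ 24 - 18 * p.1 - 6 * p.2.1} ≠ convexHull ℝ F := by
  have hcont : Continuous fun p : ℝ × ℝ × ℝ =>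
      4 - 3 * p.1 - Real.sqrt (9 * p.1 ^ 2 - 15 * p.1 + 7) := by
    apply Continuous.sub
    · exact continuous_const.sub (continuous_const.mul continuous_fst)
    · exact Real.continuous_sqrt.comp (by fun_prop)
  refine ⟨?_, ?_, ?_⟩
  · -- compactness
    have hclosed : IsClosed {p : ℝ × ℝ × ℝ | 0 ≤ p.1 ∧ p.1 ≤ 1 ∧ 0 ≤ p.2.1 ∧
        p.2.1 ≤ 4 - 3 * p.1 - Real.sqrt (9 * p.1 ^ 2 - 15 * p.1 + 7) ∧
        0 ≤ p.2.2 ∧ p.2.2 ≤ 24 - 18 * p.1 - 6 * p.2.1} := by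
      simp only [Set.setOf_and]
      refine (isClosed_le continuous_const continuous_fst).inter
        ((isClosed_le continuous_fst continuous_const).inter
        ((isClosed_le continuous_const (continuous_fst.comp continuous_snd)).inter
        ((isClosed_le (continuous_fst.comp continuous_snd) hcont).inter
        ((isClosed_le continuous_const (continuous_snd.comp continuous_snd)).inter
        (isClosed_le (continuous_snd.comp continuous_snd) (by fun_prop))))))
    refine IsCompact.of_isClosed_subset
      (isCompact_Icc (a := ((0 : ℝ), (0 : ℝ), (0 : ℝ))) (b := (1, 4, 24))) hclosed ?_
    rintro ⟨r, t, y⟩ ⟨h1, h2, h3, h4, h5, h6⟩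
    have hs := Real.sqrt_nonneg (9 * r ^ 2 - 15 * r + 7)
    simp only [Set.mem_Icc, Prod.mk_le_mk] at *
    exact ⟨⟨h1, h3, h5⟩, h2, by linarith, by linarith⟩
  · -- convexity
    rintro ⟨r1, t1, y1⟩ ⟨a1, a2, a3, a4, a5, a6⟩ ⟨r2, t2, y2⟩ ⟨b1, b2, b3, b4, b5, b6⟩
      a b ha hb hab
    have hconv := sqrt_g_convex r1 r2 a b ha hb hab
    simp only [Set.mem_setOf_eq, Prod.smul_mk, smul_eq_mul, Prod.mk_add_mk] at *
    refine ⟨by nlinarith [mul_nonneg ha a1, mul_nonneg hb b1],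
      by nlinarith [mul_le_mul_of_nonneg_left a2 ha, mul_le_mul_of_nonneg_left b2 hb],
      by nlinarith [mul_nonneg ha a3, mul_nonneg hb b3], ?_,
      by nlinarith [mul_nonneg ha a5, mul_nonneg hb b5],
      by nlinarith [mul_le_mul_of_nonneg_left a6 ha, mul_le_mul_of_nonneg_left b6 hb]⟩
    have m1 := mul_le_mul_of_nonneg_left a4 ha
    have m2 := mul_le_mul_of_nonneg_left b4 hb
    nlinarith [hconv, m1, m2]
  · -- non-polyhedrality
    intro F hF hEq
    set φ : ℝ → ℝ × ℝ × ℝ :=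
      fun r => (r, 4 - 3 * r - Real.sqrt (9 * r ^ 2 - 15 * r + 7), 0) with hφ
    have hsqle : ∀ r : ℝ, r ≤ 1 → Real.sqrt (9 * r ^ 2 - 15 * r + 7) ≤ 4 - 3 * r := by
      intro r hr
      rw [show (4 - 3 * r) = Real.sqrt ((4 - 3 * r) ^ 2) from
        (Real.sqrt_sq (by linarith)).symm]
      exact Real.sqrt_le_sqrt (by nlinarith)
    have hmem : ∀ r ∈ Set.Ioo (0 : ℝ) 1, φ r ∈ {p : ℝ × ℝ × ℝ | 0 ≤ p.1 ∧ p.1 ≤ 1 ∧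
        0 ≤ p.2.1 ∧ p.2.1 ≤ 4 - 3 * p.1 - Real.sqrt (9 * p.1 ^ 2 - 15 * p.1 + 7) ∧
        0 ≤ p.2.2 ∧ p.2.2 ≤ 24 - 18 * p.1 - 6 * p.2.1} := by
      intro r hr
      have hs := Real.sqrt_nonneg (9 * r ^ 2 - 15 * r + 7)
      simp only [hφ, Set.mem_setOf_eq]
      exact ⟨hr.1.le, hr.2.le, by linarith [hsqle r hr.2.le], le_refl _, le_refl _,
        by linarith⟩
    have hext : ∀ r ∈ Set.Ioo (0 : ℝ) 1, φ r ∈ Set.extremePoints ℝ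
        {p : ℝ × ℝ × ℝ | 0 ≤ p.1 ∧ p.1 ≤ 1 ∧
        0 ≤ p.2.1 ∧ p.2.1 ≤ 4 - 3 * p.1 - Real.sqrt (9 * p.1 ^ 2 - 15 * p.1 + 7) ∧
        0 ≤ p.2.2 ∧ p.2.2 ≤ 24 - 18 * p.1 - 6 * p.2.1} := by
      intro r hr
      refine ⟨hmem r hr, ?_⟩
      rintro ⟨r1, t1, y1⟩ ⟨p1, p2, p3, p4, p5, p6⟩ ⟨r2, t2, y2⟩ ⟨q1, q2, q3, q4, q5, q6⟩
        ⟨a, b, ha, hb, hab, heq⟩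
      simp only [hφ, Prod.smul_mk, smul_eq_mul, Prod.mk_add_mk, Prod.mk.injEq] at heq
      obtain ⟨e1, e2, e3⟩ := heq
      simp only [Set.mem_setOf_eq] at p4 q4
      -- y coordinates vanish
      have hay : a * y1 = 0 := le_antisymm (by nlinarith [mul_nonneg hb.le q5])
        (mul_nonneg ha.le p5)
      have hy1 : y1 = 0 := by
        rcases mul_eq_zero.mp hay with h | h
        · exact absurd h (ne_of_gt ha)
        · exact h
      have hy2 : y2 = 0 := by
        rcases mul_eq_zero.mp (by linarith [e3, hay] : b * y2 = 0) with h | h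
        · exact absurd h (ne_of_gt hb)
        · exact h
      -- r coordinates equal
      have hr12 : r1 = r2 := by
        by_contra hne
        have hlt := sqrt_g_convex_lt r1 r2 a b hne ha hb hab
        rw [e1] at hlt
        have m1 := mul_le_mul_of_nonneg_left p4 ha.le
        have m2 := mul_le_mul_of_nonneg_left q4 hb.le
        nlinarith [hlt, m1, m2, e2, e1, hab]
      subst hr12
      have hr1r : r1 = r := by linear_combination e1 - r1 * hab
      subst hr1r
      -- t coordinates equal
      have key : a * ((4 - 3 * r1 - Real.sqrt (9 * r1 ^ 2 - 15 * r1 + 7)) - t1) +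
          b * ((4 - 3 * r1 - Real.sqrt (9 * r1 ^ 2 - 15 * r1 + 7)) - t2) = 0 := by
        linear_combination (4 - 3 * r1 - Real.sqrt (9 * r1 ^ 2 - 15 * r1 + 7)) * hab - e2
      have k1 : a * ((4 - 3 * r1 - Real.sqrt (9 * r1 ^ 2 - 15 * r1 + 7)) - t1) = 0 :=
        le_antisymm (by linarith [mul_nonneg hb.le (sub_nonneg.mpr q4)])
          (mul_nonneg ha.le (sub_nonneg.mpr p4))
      have k2 : b * ((4 - 3 * r1 - Real.sqrt (9 * r1 ^ 2 - 15 * r1 + 7)) - t2) = 0 := by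
        linarith [key, k1]
      have ht1 : t1 = 4 - 3 * r1 - Real.sqrt (9 * r1 ^ 2 - 15 * r1 + 7) := by
        rcases mul_eq_zero.mp k1 with h | h
        · exact absurd h (ne_of_gt ha)
        · linarith [sub_eq_zero.mp h]
      have ht2 : t2 = 4 - 3 * r1 - Real.sqrt (9 * r1 ^ 2 - 15 * r1 + 7) := by
        rcases mul_eq_zero.mp k2 with h | h
        · exact absurd h (ne_of_gt hb)
        · linarith [sub_eq_zero.mp h]
      exact by simp [hφ, ht1, hy1]
    have hsub : φ '' Set.Ioo (0 : ℝ) 1 ⊆ F := by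
      rintro _ ⟨r, hr, rfl⟩
      exact extremePoints_convexHull_subset (hEq ▸ hext r hr)
    have hinj : Set.InjOn φ (Set.Ioo (0 : ℝ) 1) := by
      intro x _ y _ h
      simpa [hφ, Prod.mk.injEq] using congrArg Prod.fst h
    exact Set.Ioo_infinite (by norm_num : (0 : ℝ) < 1)
      (Set.Finite.of_finite_image (hF.subset hsub) hinj)
end

section
/- Let L = {(x, y, z) ∈ ℝ³ : 0 ≤ x and y² + z² ≤ x²} (the Lorentz cone), let a ∈ ℝ³, and let S = {v ∈ L : a₁v₁ + a₂v₂ + a₃v₃ = 1}. If S is compact and contains a point in the topological interior of L, then S is not the convex hull of any finite subset of ℝ³. -/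
/-- Cauchy–Schwarz style cross inequality for the Lorentz cone. -/
lemma lorentz_cross (x1 y1 z1 x2 y2 z2 : ℝ)
    (hx1 : 0 ≤ x1) (h1 : y1 ^ 2 + z1 ^ 2 ≤ x1 ^ 2)
    (hx2 : 0 ≤ x2) (h2 : y2 ^ 2 + z2 ^ 2 ≤ x2 ^ 2) :
    y1 * y2 + z1 * z2 ≤ x1 * x2 := by
  have hprod : (y1 ^ 2 + z1 ^ 2) * (y2 ^ 2 + z2 ^ 2) ≤ x1 ^ 2 * x2 ^ 2 :=
    mul_le_mul h1 h2 (by positivity) (sq_nonneg x1)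
  nlinarith [sq_nonneg (y1 * z2 - z1 * y2), mul_nonneg hx1 hx2,
    sq_nonneg (x1 * x2 - y1 * y2 - z1 * z2), sq_nonneg (x1 * x2 + y1 * y2 + z1 * z2)]

set_option maxHeartbeats 1000000 in
/-- Algebraic core of the extreme point argument: if two points of the Lorentz cone
lying on the affine plane combine convexly to a point on the boundary of the cone,
then they are equal. -/
lemma lorentz_aux_extreme (a1 a2 a3 x1 y1 z1 x2 y2 z2 α β : ℝ)
    (hx1 : 0 ≤ x1) (h1 : y1 ^ 2 + z1 ^ 2 ≤ x1 ^ 2)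
    (hx2 : 0 ≤ x2) (h2 : y2 ^ 2 + z2 ^ 2 ≤ x2 ^ 2)
    (hp1 : a1 * x1 + a2 * y1 + a3 * z1 = 1) (hp2 : a1 * x2 + a2 * y2 + a3 * z2 = 1)
    (hα : 0 < α) (hβ : 0 < β) (hαβ : α + β = 1)
    (hb : (α * y1 + β * y2) ^ 2 + (α * z1 + β * z2) ^ 2 = (α * x1 + β * x2) ^ 2) :
    x1 = x2 ∧ y1 = y2 ∧ z1 = z2 := by
  have hC : y1 * y2 + z1 * z2 ≤ x1 * x2 := lorentz_cross x1 y1 z1 x2 y2 z2 hx1 h1 hx2 h2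
  have e : α ^ 2 * (x1 ^ 2 - y1 ^ 2 - z1 ^ 2) + β ^ 2 * (x2 ^ 2 - y2 ^ 2 - z2 ^ 2)
      + 2 * α * β * (x1 * x2 - y1 * y2 - z1 * z2) = 0 := by linear_combination -hb
  have t1 : 0 ≤ α ^ 2 * (x1 ^ 2 - y1 ^ 2 - z1 ^ 2) :=
    mul_nonneg (sq_nonneg α) (by linarith)
  have t2 : 0 ≤ β ^ 2 * (x2 ^ 2 - y2 ^ 2 - z2 ^ 2) :=
    mul_nonneg (sq_nonneg β) (by linarith)
  have t3 : 0 ≤ 2 * α * β * (x1 * x2 - y1 * y2 - z1 * z2) :=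
    mul_nonneg (by positivity) (by linarith)
  have t1' : α ^ 2 * (x1 ^ 2 - y1 ^ 2 - z1 ^ 2) = 0 := by linarith
  have t2' : β ^ 2 * (x2 ^ 2 - y2 ^ 2 - z2 ^ 2) = 0 := by linarith
  have t3' : 2 * α * β * (x1 * x2 - y1 * y2 - z1 * z2) = 0 := by linarith
  have hA : y1 ^ 2 + z1 ^ 2 = x1 ^ 2 := by
    have := (mul_eq_zero.mp t1').resolve_left (by positivity)
    linarith
  have hB : y2 ^ 2 + z2 ^ 2 = x2 ^ 2 := by
    have := (mul_eq_zero.mp t2').resolve_left (by positivity)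
    linarith
  have hC' : y1 * y2 + z1 * z2 = x1 * x2 := by
    have := (mul_eq_zero.mp t3').resolve_left (by positivity)
    linarith
  have hx1' : 0 < x1 := by
    rcases lt_or_eq_of_le hx1 with h | h
    · exact h
    · exfalso
      have hy : y1 = 0 := by nlinarith [sq_nonneg y1, sq_nonneg z1]
      have hz : z1 = 0 := by nlinarith [sq_nonneg y1, sq_nonneg z1]
      rw [hy, hz, ← h] at hp1; linarith
  have hx2' : 0 < x2 := by
    rcases lt_or_eq_of_le hx2 with h | h
    · exact h
    · exfalso
      have hy : y2 = 0 := by nlinarith [sq_nonneg y2, sq_nonneg z2]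
      have hz : z2 = 0 := by nlinarith [sq_nonneg y2, sq_nonneg z2]
      rw [hy, hz, ← h] at hp2; linarith
  have hkey : (x2 * y1 - x1 * y2) ^ 2 + (x2 * z1 - x1 * z2) ^ 2 = 0 := by
    linear_combination x2 ^ 2 * hA + x1 ^ 2 * hB - 2 * x1 * x2 * hC'
  have hy' : x2 * y1 - x1 * y2 = 0 := by
    nlinarith [sq_nonneg (x2 * y1 - x1 * y2), sq_nonneg (x2 * z1 - x1 * z2)]
  have hz' : x2 * z1 - x1 * z2 = 0 := by
    nlinarith [sq_nonneg (x2 * y1 - x1 * y2), sq_nonneg (x2 * z1 - x1 * z2)]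
  have hx : x1 = x2 := by linear_combination x2 * hp1 - x1 * hp2 - a2 * hy' - a3 * hz'
  refine ⟨hx, ?_, ?_⟩
  · have : x1 * y1 = x1 * y2 := by linear_combination hy' + y1 * hx
    exact mul_left_cancel₀ (ne_of_gt hx1') this
  · have : x1 * z1 = x1 * z2 := by linear_combination hz' + z1 * hx
    exact mul_left_cancel₀ (ne_of_gt hx1') this

set_option maxHeartbeats 1000000 in
/-- A compact affine slice `S = {v ∈ L : a·v = 1}` of the Lorentz cone
`L = {(x, y, z) : 0 ≤ x, y² + z² ≤ x²}` that contains a point of the topological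
interior of `L` is not the convex hull of any finite subset of `ℝ³`.  This is the
convex-geometric mechanism behind the second non-polyhedral Okounkov body. -/
theorem lorentz_slice_not_polyhedral (a : ℝ × ℝ × ℝ)
    (L : Set (ℝ × ℝ × ℝ)) (hL : L = {v | 0 ≤ v.1 ∧ v.2.1 ^ 2 + v.2.2 ^ 2 ≤ v.1 ^ 2})
    (S : Set (ℝ × ℝ × ℝ))
    (hS : S = {v ∈ L | a.1 * v.1 + a.2.1 * v.2.1 + a.2.2 * v.2.2 = 1})
    (hcomp : IsCompact S) (hint : ∃ p ∈ S, p ∈ interior L) :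
    ∀ F : Set (ℝ × ℝ × ℝ), F.Finite → S ≠ convexHull ℝ F := by
  intro F hF hSF
  obtain ⟨p, hpS, -⟩ := hint
  subst hL
  have hmem : ∀ v : ℝ × ℝ × ℝ, v ∈ S ↔
      (0 ≤ v.1 ∧ v.2.1 ^ 2 + v.2.2 ^ 2 ≤ v.1 ^ 2) ∧
        a.1 * v.1 + a.2.1 * v.2.1 + a.2.2 * v.2.2 = 1 := by
    intro v
    simp only [hS, Set.mem_setOf_eq]
  obtain ⟨⟨hp0, hpc⟩, hpp⟩ := (hmem p).mp hpS
  -- the first coordinate of p is positive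
  have hp1 : 0 < p.1 := by
    rcases lt_or_eq_of_le hp0 with h | h
    · exact h
    · exfalso
      have hy : p.2.1 = 0 := by nlinarith [sq_nonneg p.2.1, sq_nonneg p.2.2]
      have hz : p.2.2 = 0 := by nlinarith [sq_nonneg p.2.1, sq_nonneg p.2.2]
      rw [hy, hz, ← h] at hpp; linarith
  -- a bound on S
  obtain ⟨R, hR⟩ := isBounded_iff_forall_norm_le.mp hcomp.isBounded
  -- positivity of the functional on the cone
  have hpos : ∀ v : ℝ × ℝ × ℝ, 0 ≤ v.1 → v.2.1 ^ 2 + v.2.2 ^ 2 ≤ v.1 ^ 2 → 0 < v.1 →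
      0 < a.1 * v.1 + a.2.1 * v.2.1 + a.2.2 * v.2.2 := by
    intro v hv0 hvc hv1
    by_contra hcon
    push_neg at hcon
    set c : ℝ := a.1 * v.1 + a.2.1 * v.2.1 + a.2.2 * v.2.2 with hcdef
    obtain ⟨n, hn⟩ := exists_nat_gt (R / v.1)
    have hnv : R < n * v.1 := (div_lt_iff₀ hv1).mp hn
    set u : ℝ × ℝ × ℝ := (1 - n * c) • p + (n : ℝ) • v with hudef
    have hu1 : u.1 = (1 - n * c) * p.1 + n * v.1 := rfl
    have hu2 : u.2.1 = (1 - n * c) * p.2.1 + n * v.2.1 := rfl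
    have hu3 : u.2.2 = (1 - n * c) * p.2.2 + n * v.2.2 := rfl
    have hn0 : (0 : ℝ) ≤ n := Nat.cast_nonneg n
    have hnc : (1 : ℝ) ≤ 1 - n * c := by nlinarith
    have hnc0 : (0 : ℝ) ≤ 1 - n * c := by linarith
    have hcross : p.2.1 * v.2.1 + p.2.2 * v.2.2 ≤ p.1 * v.1 :=
      lorentz_cross p.1 p.2.1 p.2.2 v.1 v.2.1 v.2.2 hp0 hpc hv0 hvc
    have huL : 0 ≤ u.1 ∧ u.2.1 ^ 2 + u.2.2 ^ 2 ≤ u.1 ^ 2 := by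
      constructor
      · rw [hu1]; positivity
      · rw [hu1, hu2, hu3]
        nlinarith [mul_nonneg (sq_nonneg (1 - n * c)) (sub_nonneg.mpr hpc),
          mul_nonneg (sq_nonneg ((n : ℝ))) (sub_nonneg.mpr hvc),
          mul_nonneg (mul_nonneg hnc0 hn0) (sub_nonneg.mpr hcross)]
    have huS : u ∈ S := by
      refine (hmem u).mpr ⟨huL, ?_⟩
      rw [hu1, hu2, hu3]
      linear_combination (1 - n * c) * hpp
    have hbig : R < u.1 := by
      rw [hu1]
      nlinarith
    have : u.1 ≤ R := le_trans (le_trans (le_abs_self _) (norm_fst_le u)) (hR u huS)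
    linarith
  -- the family of extreme points
  set g : ℝ → ℝ × ℝ × ℝ := fun θ =>
    (1 / (a.1 + a.2.1 * Real.cos θ + a.2.2 * Real.sin θ)) •
      ((1 : ℝ), Real.cos θ, Real.sin θ) with hgdef
  have hcθ : ∀ θ : ℝ, 0 < a.1 + a.2.1 * Real.cos θ + a.2.2 * Real.sin θ := by
    intro θ
    have := hpos ((1 : ℝ), Real.cos θ, Real.sin θ) (by norm_num)
      (by simp [Real.cos_sq_add_sin_sq]) (by norm_num)
    simpa using this
  have hg1 : ∀ θ : ℝ, (g θ).1 = 1 / (a.1 + a.2.1 * Real.cos θ + a.2.2 * Real.sin θ) := by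
    intro θ; simp [hgdef]
  have hg2 : ∀ θ : ℝ, (g θ).2.1 =
      (1 / (a.1 + a.2.1 * Real.cos θ + a.2.2 * Real.sin θ)) * Real.cos θ := by
    intro θ; simp [hgdef]
  have hg3 : ∀ θ : ℝ, (g θ).2.2 =
      (1 / (a.1 + a.2.1 * Real.cos θ + a.2.2 * Real.sin θ)) * Real.sin θ := by
    intro θ; simp [hgdef]
  have hgb : ∀ θ : ℝ, (g θ).2.1 ^ 2 + (g θ).2.2 ^ 2 = (g θ).1 ^ 2 := by
    intro θ
    rw [hg1, hg2, hg3]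
    have h := Real.cos_sq_add_sin_sq θ
    field_simp
    rw [h]
  have hgF : ∀ θ ∈ Set.Ioo (0 : ℝ) 1, g θ ∈ F := by
    intro θ _
    have hcpos := hcθ θ
    have hg1pos : 0 < (g θ).1 := by rw [hg1]; positivity
    have hgS : g θ ∈ S := by
      refine (hmem _).mpr ⟨⟨le_of_lt hg1pos, le_of_eq (hgb θ)⟩, ?_⟩
      rw [hg1, hg2, hg3]
      field_simp
      try ring
    -- g θ is an extreme point of S
    have hext : g θ ∈ Set.extremePoints ℝ S := by
      refine ⟨hgS, ?_⟩
      intro x₁ hx₁' x₂ hx₂' hseg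
      obtain ⟨⟨hx1, h1⟩, hpl1⟩ := (hmem x₁).mp hx₁'
      obtain ⟨⟨hx2, h2⟩, hpl2⟩ := (hmem x₂).mp hx₂'
      obtain ⟨α, β, hα, hβ, hαβ, hq⟩ := hseg
      have e1 : α * x₁.1 + β * x₂.1 = (g θ).1 := congrArg Prod.fst hq
      have e2 : α * x₁.2.1 + β * x₂.2.1 = (g θ).2.1 := congrArg (fun v => v.2.1) hq
      have e3 : α * x₁.2.2 + β * x₂.2.2 = (g θ).2.2 := congrArg (fun v => v.2.2) hq
      have hb : (α * x₁.2.1 + β * x₂.2.1) ^ 2 + (α * x₁.2.2 + β * x₂.2.2) ^ 2 =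
          (α * x₁.1 + β * x₂.1) ^ 2 := by rw [e1, e2, e3]; exact hgb θ
      obtain ⟨hxx, hyy, hzz⟩ := lorentz_aux_extreme a.1 a.2.1 a.2.2 x₁.1 x₁.2.1 x₁.2.2
        x₂.1 x₂.2.1 x₂.2.2 α β hx1 h1 hx2 h2 hpl1 hpl2 hα hβ hαβ hb
      have hx12 : x₁ = x₂ := Prod.ext hxx (Prod.ext hyy hzz)
      have hxg : x₁ = g θ := by
        rw [← hq, hx12, ← add_smul, hαβ, one_smul]
      exact hxg
    rw [hSF] at hext
    exact extremePoints_convexHull_subset hext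
  -- injectivity
  have hinj : Set.InjOn g (Set.Ioo (0 : ℝ) 1) := by
    intro θ hθ θ' hθ' heq
    have hc := hcθ θ
    have hc' := hcθ θ'
    have e1 : (g θ).1 = (g θ').1 := by rw [heq]
    have e2 : (g θ).2.1 = (g θ').2.1 := by rw [heq]
    rw [hg1, hg1] at e1
    have hceq : (a.1 + a.2.1 * Real.cos θ + a.2.2 * Real.sin θ) =
        (a.1 + a.2.1 * Real.cos θ' + a.2.2 * Real.sin θ') := by
      field_simp at e1
      linarith
    have hcos : Real.cos θ = Real.cos θ' := by
      rw [hg2, hg2, ← hceq] at e2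
      have hne : (a.1 + a.2.1 * Real.cos θ + a.2.2 * Real.sin θ) ≠ 0 := ne_of_gt hc
      field_simp at e2
      exact e2
    have h1pi : (1 : ℝ) ≤ Real.pi := by linarith [Real.pi_gt_three]
    exact Real.injOn_cos ⟨le_of_lt hθ.1, le_trans (le_of_lt hθ.2) h1pi⟩
      ⟨le_of_lt hθ'.1, le_trans (le_of_lt hθ'.2) h1pi⟩ hcos
  -- conclude
  have hIoo : (Set.Ioo (0 : ℝ) 1).Infinite := Set.Ioo_infinite (by norm_num)
  have himg : (g '' Set.Ioo (0 : ℝ) 1).Infinite := Set.Infinite.image hinj hIoo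
  have hsub : g '' Set.Ioo (0 : ℝ) 1 ⊆ F := by
    rintro x ⟨θ, hθ, rfl⟩
    exact hgF θ hθ
  exact himg (hF.subset hsub)
end
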